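/- The asymptotic limit used in the Vasyunin formula proof: lim_{s→1} Γ(1-s-a)·Γ(1-s)·(cos(π(2s+a)/2) + cos(πa/2)) = -π·Γ(-a)·sin(πa/2), for complex a not a nonnegative integer. -/

import Mathlib

open Complex Filter

/-- For `a ∈ ℂ` not a nonnegative integer,
`lim_{s→1} Γ(1-s-a) Γ(1-s) (cos(π(2s+a)/2) + cos(πa/2)) = -π Γ(-a) sin(πa/2)`. -/
theorem gamma_cos_limit (a : ℂ) (ha : ∀ n : ℕ, a ≠ n) :
    Tendsto (fun s : ℂ => Complex.Gamma (1 - s - a) * Complex.Gamma (1 - s) *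
        (Complex.cos (Real.pi * (2 * s + a) / 2) + Complex.cos (Real.pi * a / 2)))
      (nhdsWithin 1 {(1 : ℂ)}ᶜ)
      (nhds (-Real.pi * Complex.Gamma (-a) * Complex.sin (Real.pi * a / 2))) := by
  set h : ℂ → ℂ := fun s => Complex.cos (Real.pi * (2 * s + a) / 2) +
      Complex.cos (Real.pi * a / 2) with hh
  have h1 : h 1 = 0 := by
    simp only [hh]
    rw [show (Real.pi : ℂ) * (2 * 1 + a) / 2 = ↑Real.pi + ↑Real.pi * a / 2 by ring,
      Complex.cos_add]
    simp
  have hu : HasDerivAt (fun s : ℂ => (Real.pi : ℂ) * (2 * s + a) / 2) (Real.pi) 1 := by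
    have := ((((hasDerivAt_id (1:ℂ)).const_mul (2:ℂ)).add_const a).const_mul
      ((Real.pi : ℂ))).div_const 2
    simpa using this
  have hd : HasDerivAt h ((Real.pi : ℂ) * Complex.sin (Real.pi * a / 2)) 1 := by
    have := (hu.ccos).add_const (Complex.cos (Real.pi * a / 2))
    refine this.congr_deriv ?_
    symm
    rw [show (Real.pi : ℂ) * (2 * 1 + a) / 2 = ↑Real.pi + ↑Real.pi * a / 2 by ring,
      Complex.sin_add]
    simp
    ring
  have hslope : Tendsto (fun s => h s / (1 - s)) (nhdsWithin 1 {(1:ℂ)}ᶜ)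
      (nhds (-((Real.pi : ℂ) * Complex.sin (Real.pi * a / 2)))) := by
    have hsl := (hasDerivAt_iff_tendsto_slope.mp hd).neg
    refine hsl.congr fun s => ?_
    simp only [slope, h1, vsub_eq_sub, sub_zero, smul_eq_mul]
    rw [show (1 : ℂ) - s = -(s - 1) by ring, div_neg, div_eq_inv_mul]
  have hGamCont : ContinuousAt Complex.Gamma (-a) := by
    refine (Complex.differentiableAt_Gamma _ fun m => ?_).continuousAt
    intro e
    exact ha m (by rw [← neg_neg a, e]; ring)
  have hG1 : Tendsto (fun s : ℂ => Complex.Gamma (1 - s - a)) (nhdsWithin 1 {(1:ℂ)}ᶜ)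
      (nhds (Complex.Gamma (-a))) := by
    have hc : ContinuousAt (fun s : ℂ => Complex.Gamma (1 - s - a)) 1 := by
      have hlin : ContinuousAt (fun s : ℂ => 1 - s - a) 1 := by fun_prop
      have hpt : ContinuousAt Complex.Gamma (1 - 1 - a) := by
        rw [show (1:ℂ) - 1 - a = -a by ring]; exact hGamCont
      exact ContinuousAt.comp (g := Complex.Gamma)
        (f := fun s : ℂ => 1 - s - a) hpt hlin
    have := hc.tendsto
    rw [show (1 : ℂ) - 1 - a = -a by ring] at this
    exact tendsto_nhdsWithin_of_tendsto_nhds this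
  have hG2 : Tendsto (fun s : ℂ => Complex.Gamma (2 - s)) (nhdsWithin 1 {(1:ℂ)}ᶜ)
      (nhds 1) := by
    have hGc : ContinuousAt Complex.Gamma 1 := by
      refine (Complex.differentiableAt_Gamma _ fun m => ?_).continuousAt
      intro e
      have hre := congrArg Complex.re e
      simp at hre
      linarith [Nat.cast_nonneg (α := ℝ) m, hre]
    have hc : ContinuousAt (fun s : ℂ => Complex.Gamma (2 - s)) 1 := by
      have hlin : ContinuousAt (fun s : ℂ => 2 - s) 1 := by fun_prop
      have hpt : ContinuousAt Complex.Gamma ((2:ℂ) - 1) := by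
        rw [show (2:ℂ) - 1 = 1 by ring]; exact hGc
      exact ContinuousAt.comp (g := Complex.Gamma)
        (f := fun s : ℂ => 2 - s) hpt hlin
    have := hc.tendsto
    rw [show (2 : ℂ) - 1 = 1 by ring, Complex.Gamma_one] at this
    exact tendsto_nhdsWithin_of_tendsto_nhds this
  have hmain := (hG1.mul hG2).mul hslope
  have heq : (fun s : ℂ => Complex.Gamma (1 - s - a) * Complex.Gamma (1 - s) * h s)
      =ᶠ[nhdsWithin 1 {(1:ℂ)}ᶜ]
      (fun s : ℂ => Complex.Gamma (1 - s - a) * Complex.Gamma (2 - s) * (h s / (1 - s))) := by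
    filter_upwards [self_mem_nhdsWithin] with s hs
    have hs0 : (1 : ℂ) - s ≠ 0 := sub_ne_zero.mpr (Ne.symm hs)
    have hGam : Complex.Gamma (1 - s) = Complex.Gamma (2 - s) / (1 - s) := by
      rw [eq_div_iff hs0, mul_comm, ← Complex.Gamma_add_one _ hs0]
      ring_nf
    rw [hGam]
    field_simp
  refine Tendsto.congr' heq.symm ?_
  convert hmain using 2
  ring
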